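/- Let (F₁, F₂) and (G₁, G₂) be the CHFIS pairs, with the same parameters α_{n,m}, β_{n,m}, γ_{n,m}, for generalized interpolation data Δ = {(x_i, y_j, z_{i,j}, t_{i,j})} and Δ* = {(x*_i, y*_j, z*_{i,j}, t*_{i,j})} respectively, where the knots satisfy the invariance-of-ratio condition and S* ⊆ S. Suppose also that CHFIS pairs exist for the intermediate data Δ*₁ = {(x_i, y_j, z_{i,j}, t*_{i,j})} and Δ*₂ = {(x_i, y_j, z*_{i,j}, t*_{i,j})} (same parameters), and that M̄ ≥ 0 and δ ∈ (0,1] are such that both components of the CHFIS pair for Δ*₂ satisfy the Hölder bound |H(X) − H(X̄)| ≤ M̄ · d_M(X,X̄)^δ for all X, X̄ ∈ S. Then sup_{(x,y) ∈ S*} |F₁(x,y) − G₁(x,y)| ≤ d(Δ, Δ*), where d(Δ, Δ*) = (8β/((1−α)(1−γ))) · max_{n,m}|t_{n,m} − t*_{n,m}| + (4(1+α)/(1−α)) · max_{n,m}|z_{n,m} − z*_{n,m}| + [2βγ/((1−α)(1−γ)) + (1+α)/(1−α)] · M̄ · max_{n,m}(|x_n − x*_n| + |y_m − y*_m|)^δ,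 with α = max_{n,m}|α_{n,m}|, β = max_{n,m}|β_{n,m}|, γ = max_{n,m}|γ_{n,m}|. -/

import Mathlib

open Real Set

noncomputable section

/-- `z_eva` (resp. `t_eva`) from the paper: `z N M - z N 0 - z 0 M + z 0 0`. -/
def eva (N M : ℕ) (z : ℕ → ℕ → ℝ) : ℝ := z N M - z N 0 - z 0 M + z 0 0

/-- The coefficient `g_{n,m}` determined by the join-up conditions. -/
def gCoef (N M : ℕ) (x y : ℕ → ℝ) (z t : ℕ → ℕ → ℝ) (a b : ℕ → ℕ → ℝ) (n m : ℕ) : ℝ :=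
  (z (n-1) (m-1) - z (n-1) m - z n (m-1) + z n m
    - a n m * eva N M z - b n m * eva N M t) / ((x 0 - x N) * (y 0 - y M))

/-- The coefficient `e_{n,m}`. -/
def eCoef (N M : ℕ) (x y : ℕ → ℝ) (z t : ℕ → ℕ → ℝ) (a b : ℕ → ℕ → ℝ) (n m : ℕ) : ℝ :=
  (z (n-1) (m-1) - z n (m-1) - a n m * (z 0 0 - z N 0) - b n m * (t 0 0 - t N 0)
    - gCoef N M x y z t a b n m * (x 0 - x N) * y 0) / (x 0 - x N)

/-- The coefficient `f_{n,m}`. -/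
def fCoef (N M : ℕ) (x y : ℕ → ℝ) (z t : ℕ → ℕ → ℝ) (a b : ℕ → ℕ → ℝ) (n m : ℕ) : ℝ :=
  (z (n-1) (m-1) - z (n-1) m - a n m * (z 0 0 - z 0 M) - b n m * (t 0 0 - t 0 M)
    - gCoef N M x y z t a b n m * (y 0 - y M) * x 0) / (y 0 - y M)

/-- The coefficient `k_{n,m}`. -/
def kCoef (N M : ℕ) (x y : ℕ → ℝ) (z t : ℕ → ℕ → ℝ) (a b : ℕ → ℕ → ℝ) (n m : ℕ) : ℝ :=
  z n m - eCoef N M x y z t a b n m * x N - fCoef N M x y z t a b n m * y M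
    - a n m * z N M - b n m * t N M - gCoef N M x y z t a b n m * x N * y M

/-- `p_{n,m}(X,Y) = e_{n,m} X + f_{n,m} Y + g_{n,m} X Y + k_{n,m}`. -/
def pMap (N M : ℕ) (x y : ℕ → ℝ) (z t : ℕ → ℕ → ℝ) (a b : ℕ → ℕ → ℝ) (n m : ℕ)
    (X Y : ℝ) : ℝ :=
  eCoef N M x y z t a b n m * X + fCoef N M x y z t a b n m * Y
    + gCoef N M x y z t a b n m * X * Y + kCoef N M x y z t a b n m

/-- `q_{n,m}(X,Y) = ẽ_{n,m} X + f̃_{n,m} Y + g̃_{n,m} X Y + k̃_{n,m}`; it is `p` built from the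
data `t` with parameters `γ` and `0`. -/
def qMap (N M : ℕ) (x y : ℕ → ℝ) (t : ℕ → ℕ → ℝ) (c : ℕ → ℕ → ℝ) (n m : ℕ) (X Y : ℝ) : ℝ :=
  pMap N M x y t t c (fun _ _ => 0) n m X Y

/-- `φ_n` (resp. `ψ_m`): the affine map of `[x₀, x_N]` onto `[x_{n-1}, x_n]`. -/
def phiMap (N : ℕ) (x : ℕ → ℝ) (n : ℕ) (X : ℝ) : ℝ :=
  x (n-1) + (x n - x (n-1)) * (X - x 0) / (x N - x 0)

/-- Validity of generalized interpolation data: `N, M ≥ 1`, strictly increasing knots,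
`|α_{n,m}| < 1` and `|β_{n,m}| + |γ_{n,m}| < 1`. -/
structure DataOK (N M : ℕ) (x y : ℕ → ℝ) (a b c : ℕ → ℕ → ℝ) : Prop where
  hN : 1 ≤ N
  hM : 1 ≤ M
  hx : ∀ i < N, x i < x (i+1)
  hy : ∀ j < M, y j < y (j+1)
  ha : ∀ n m, 1 ≤ n → n ≤ N → 1 ≤ m → m ≤ M → |a n m| < 1
  hbc : ∀ n m, 1 ≤ n → n ≤ N → 1 ≤ m → m ≤ M → |b n m| + |c n m| < 1

/-- `(F₁, F₂)` is the CHFIS pair for the generalized interpolation data. -/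
def IsCHFIS (N M : ℕ) (x y : ℕ → ℝ) (z t : ℕ → ℕ → ℝ) (a b c : ℕ → ℕ → ℝ)
    (F₁ F₂ : ℝ → ℝ → ℝ) : Prop :=
  ContinuousOn (fun P : ℝ × ℝ => F₁ P.1 P.2) (Icc (x 0) (x N) ×ˢ Icc (y 0) (y M)) ∧
  ContinuousOn (fun P : ℝ × ℝ => F₂ P.1 P.2) (Icc (x 0) (x N) ×ˢ Icc (y 0) (y M)) ∧
  (∀ i ≤ N, ∀ j ≤ M, F₁ (x i) (y j) = z i j ∧ F₂ (x i) (y j) = t i j) ∧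
  ∀ n m, 1 ≤ n → n ≤ N → 1 ≤ m → m ≤ M →
    ∀ X ∈ Icc (x 0) (x N), ∀ Y ∈ Icc (y 0) (y M),
      F₁ (phiMap N x n X) (phiMap M y m Y)
        = a n m * F₁ X Y + b n m * F₂ X Y + pMap N M x y z t a b n m X Y ∧
      F₂ (phiMap N x n X) (phiMap M y m Y)
        = c n m * F₂ X Y + qMap N M x y t c n m X Y

/-- The invariance-of-ratio condition between the knots `x, y` and the knots `xs, ys`. -/
def RatioInv (N M : ℕ) (x y xs ys : ℕ → ℝ) : Prop :=
  (∀ n, 1 ≤ n → n ≤ N → (x 0 - x N) / (xs 0 - xs N) = (x (n-1) - x n) / (xs (n-1) - xs n)) ∧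
  (∀ m, 1 ≤ m → m ≤ M → (y 0 - y M) / (ys 0 - ys M) = (y (m-1) - y m) / (ys (m-1) - ys m))

/-- `T : [x₀, x_N] → [xs₀, xs_N]` is the cell-wise affine transfer map, sending
`[x_{n-1}, x_n]` affinely onto `[xs_{n-1}, xs_n]` (one coordinate of `R` resp. `K`). -/
def IsTransfer (N : ℕ) (x xs : ℕ → ℝ) (T : ℝ → ℝ) : Prop :=
  ∀ n, 1 ≤ n → n ≤ N → ∀ X ∈ Icc (x (n-1)) (x n),
    T X = xs (n-1) + (xs n - xs (n-1)) * (X - x (n-1)) / (x n - x (n-1))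

/-- `max { |a n m| : 1 ≤ n ≤ N, 1 ≤ m ≤ M }` (as an `sSup`). -/
def supParam (N M : ℕ) (a : ℕ → ℕ → ℝ) : ℝ :=
  sSup {v : ℝ | ∃ n m, 1 ≤ n ∧ n ≤ N ∧ 1 ≤ m ∧ m ≤ M ∧ v = |a n m|}

/-- `max { (|x_n - xs_n| + |y_m - ys_m|)^δ : 0 ≤ n ≤ N, 0 ≤ m ≤ M }` (as an `sSup`). -/
def supKnotDiff (N M : ℕ) (x xs y ys : ℕ → ℝ) (d : ℝ) : ℝ :=
  sSup {v : ℝ | ∃ n m, n ≤ N ∧ m ≤ M ∧ v = (|x n - xs n| + |y m - ys m|) ^ d}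

/-- `max { |z_{n,m} - zs_{n,m}| : 0 ≤ n ≤ N, 0 ≤ m ≤ M }` (as an `sSup`). -/
def supValDiff (N M : ℕ) (z zs : ℕ → ℕ → ℝ) : ℝ :=
  sSup {v : ℝ | ∃ n m, n ≤ N ∧ m ≤ M ∧ v = |z n m - zs n m|}

/-- `max { |z_{i,j} - z_{k,l}| : 0 ≤ i,j,k,l ≤ N }` (as an `sSup`). -/
def supPairDiff (N : ℕ) (z : ℕ → ℕ → ℝ) : ℝ :=
  sSup {v : ℝ | ∃ i j k l, i ≤ N ∧ j ≤ N ∧ k ≤ N ∧ l ≤ N ∧ v = |z i j - z k l|}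


lemma abs_le_max_of_between {p q t : ℝ} (h1 : p ≤ t) (h2 : t ≤ q) :
    |t| ≤ max |p| |q| := by
  rw [abs_le]
  constructor
  · have h3 : -|p| ≤ p := neg_abs_le p
    have h4 : |p| ≤ max |p| |q| := le_max_left _ _
    linarith
  · have h5 := le_abs_self q
    have h6 := le_max_right |p| |q|
    linarith

lemma affine_abs_le {m k u v X : ℝ} (h1 : u ≤ X) (h2 : X ≤ v) :
    |m * X + k| ≤ max |m * u + k| |m * v + k| := by
  rcases le_total 0 m with hm | hm
  · exact abs_le_max_of_between (by nlinarith) (by nlinarith)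
  · rw [max_comm]; exact abs_le_max_of_between (by nlinarith) (by nlinarith)

lemma bilin_abs_le {e f g k u v w s X Y : ℝ} (hX1 : u ≤ X) (hX2 : X ≤ v)
    (hY1 : w ≤ Y) (hY2 : Y ≤ s) :
    |e * X + f * Y + g * X * Y + k| ≤
      max (max |e*u+f*w+g*u*w+k| |e*u+f*s+g*u*s+k|)
          (max |e*v+f*w+g*v*w+k| |e*v+f*s+g*v*s+k|) := by
  have hu : |e*u+f*Y+g*u*Y+k| ≤ max |e*u+f*w+g*u*w+k| |e*u+f*s+g*u*s+k| := by
    have h := affine_abs_le (m := f + g*u) (k := e*u + k) hY1 hY2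
    rw [show (f+g*u)*Y + (e*u+k) = e*u+f*Y+g*u*Y+k by ring,
        show (f+g*u)*w + (e*u+k) = e*u+f*w+g*u*w+k by ring,
        show (f+g*u)*s + (e*u+k) = e*u+f*s+g*u*s+k by ring] at h
    exact h
  have hv : |e*v+f*Y+g*v*Y+k| ≤ max |e*v+f*w+g*v*w+k| |e*v+f*s+g*v*s+k| := by
    have h := affine_abs_le (m := f + g*v) (k := e*v + k) hY1 hY2
    rw [show (f+g*v)*Y + (e*v+k) = e*v+f*Y+g*v*Y+k by ring,
        show (f+g*v)*w + (e*v+k) = e*v+f*w+g*v*w+k by ring,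
        show (f+g*v)*s + (e*v+k) = e*v+f*s+g*v*s+k by ring] at h
    exact h
  have hX : |e*X+f*Y+g*X*Y+k| ≤ max |e*u+f*Y+g*u*Y+k| |e*v+f*Y+g*v*Y+k| := by
    have h := affine_abs_le (m := e + g*Y) (k := f*Y + k) hX1 hX2
    rw [show (e+g*Y)*X + (f*Y+k) = e*X+f*Y+g*X*Y+k by ring,
        show (e+g*Y)*u + (f*Y+k) = e*u+f*Y+g*u*Y+k by ring,
        show (e+g*Y)*v + (f*Y+k) = e*v+f*Y+g*v*Y+k by ring] at h
    exact h
  exact hX.trans (max_le_max hu hv)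

/-- The affine transfer of `[us, vs]` onto `[u, v]`. -/
def Lmap (u v us vs : ℝ) (X : ℝ) : ℝ := u + (v - u) * (X - us) / (vs - us)

lemma Lmap_left (u v us vs : ℝ) : Lmap u v us vs us = u := by simp [Lmap]

lemma Lmap_right (u v us vs : ℝ) (h : vs - us ≠ 0) : Lmap u v us vs vs = v := by
  simp only [Lmap]; field_simp; ring

lemma Lmap_mem {u v us vs X : ℝ} (huv : u ≤ v) (h : us < vs) (hX1 : us ≤ X) (hX2 : X ≤ vs) :
    Lmap u v us vs X ∈ Icc u v := by
  constructor
  · have h0 : 0 ≤ (v-u)*(X-us)/(vs-us) :=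
      div_nonneg (mul_nonneg (by linarith) (by linarith)) (by linarith)
    simp only [Lmap]; linarith
  · have h0 : (v-u)*(X-us)/(vs-us) ≤ v - u := by
      rw [div_le_iff₀ (by linarith)]; nlinarith
    simp only [Lmap]; linarith

lemma Lmap_abs_sub {u v us vs X : ℝ} (h : us < vs) (hX1 : us ≤ X) (hX2 : X ≤ vs) :
    |X - Lmap u v us vs X| ≤ max |us - u| |vs - v| := by
  have hne : vs - us ≠ 0 := by intro hh; linarith
  have e : X - Lmap u v us vs X
      = (1 - (v-u)/(vs-us))*X + ((v-u)/(vs-us)*us - u) := by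
    simp only [Lmap]; ring
  have h' := affine_abs_le (m := 1 - (v-u)/(vs-us)) (k := (v-u)/(vs-us)*us - u) hX1 hX2
  have e1 : (1 - (v-u)/(vs-us))*us + ((v-u)/(vs-us)*us - u) = us - u := by ring
  have e2 : (1 - (v-u)/(vs-us))*vs + ((v-u)/(vs-us)*us - u) = vs - v := by
    field_simp
    ring
  rw [e1, e2] at h'
  rw [e]; exact h'

lemma pMap_corner_00' (N M : ℕ) (x y : ℕ → ℝ) (z t : ℕ → ℕ → ℝ) (a b : ℕ → ℕ → ℝ) (n m : ℕ)
    (hx : x 0 - x N ≠ 0) (hy : y 0 - y M ≠ 0) :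
    pMap N M x y z t a b n m (x 0) (y 0)
      = z (n-1) (m-1) - a n m * z 0 0 - b n m * t 0 0 := by
  unfold pMap kCoef eCoef fCoef gCoef eva
  field_simp
  ring

lemma pMap_corner_N0' (N M : ℕ) (x y : ℕ → ℝ) (z t : ℕ → ℕ → ℝ) (a b : ℕ → ℕ → ℝ) (n m : ℕ)
    (hx : x 0 - x N ≠ 0) (hy : y 0 - y M ≠ 0) :
    pMap N M x y z t a b n m (x N) (y 0)
      = z n (m-1) - a n m * z N 0 - b n m * t N 0 := by
  unfold pMap kCoef eCoef fCoef gCoef eva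
  field_simp
  ring

lemma pMap_corner_0M' (N M : ℕ) (x y : ℕ → ℝ) (z t : ℕ → ℕ → ℝ) (a b : ℕ → ℕ → ℝ) (n m : ℕ)
    (hx : x 0 - x N ≠ 0) (hy : y 0 - y M ≠ 0) :
    pMap N M x y z t a b n m (x 0) (y M)
      = z (n-1) m - a n m * z 0 M - b n m * t 0 M := by
  unfold pMap kCoef eCoef fCoef gCoef eva
  field_simp
  ring

lemma pMap_corner_NM' (N M : ℕ) (x y : ℕ → ℝ) (z t : ℕ → ℕ → ℝ) (a b : ℕ → ℕ → ℝ) (n m : ℕ)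
    (hx : x 0 - x N ≠ 0) (hy : y 0 - y M ≠ 0) :
    pMap N M x y z t a b n m (x N) (y M)
      = z n m - a n m * z N M - b n m * t N M := by
  unfold pMap kCoef eCoef fCoef gCoef eva
  field_simp
  ring

/-- Key bilinear-form identity: the difference between the transferred `pMap` and the
`pMap` for the starred knots, as an explicit bilinear function (coefficients as atoms). -/
lemma pMap_transfer_form (N M : ℕ) (x y xs ys : ℕ → ℝ) (z t : ℕ → ℕ → ℝ)
    (a b : ℕ → ℕ → ℝ) (n m : ℕ) (U V : ℝ) :
    pMap N M x y z t a b n m (Lmap (x 0) (x N) (xs 0) (xs N) U)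
        (Lmap (y 0) (y M) (ys 0) (ys M) V)
      - pMap N M xs ys z t a b n m U V
    = (eCoef N M x y z t a b n m * ((x N - x 0)/(xs N - xs 0))
        + gCoef N M x y z t a b n m * ((x N - x 0)/(xs N - xs 0))
            * (y 0 - (y M - y 0)/(ys M - ys 0) * ys 0)
        - eCoef N M xs ys z t a b n m) * U
      + (fCoef N M x y z t a b n m * ((y M - y 0)/(ys M - ys 0))
        + gCoef N M x y z t a b n m * (x 0 - (x N - x 0)/(xs N - xs 0) * xs 0)
            * ((y M - y 0)/(ys M - ys 0))
        - fCoef N M xs ys z t a b n m) * V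
      + (gCoef N M x y z t a b n m * ((x N - x 0)/(xs N - xs 0))
            * ((y M - y 0)/(ys M - ys 0))
        - gCoef N M xs ys z t a b n m) * U * V
      + (eCoef N M x y z t a b n m * (x 0 - (x N - x 0)/(xs N - xs 0) * xs 0)
        + fCoef N M x y z t a b n m * (y 0 - (y M - y 0)/(ys M - ys 0) * ys 0)
        + gCoef N M x y z t a b n m * (x 0 - (x N - x 0)/(xs N - xs 0) * xs 0)
            * (y 0 - (y M - y 0)/(ys M - ys 0) * ys 0)
        + kCoef N M x y z t a b n m - kCoef N M xs ys z t a b n m) := by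
  simp only [pMap, Lmap]
  ring

/-- The transfer identity: `p` for knots `x, y` precomposed with the affine transfer
agrees with `p` for the starred knots, on the starred rectangle. -/
lemma pMap_transfer (N M : ℕ) (x y xs ys : ℕ → ℝ) (z t : ℕ → ℕ → ℝ) (a b : ℕ → ℕ → ℝ)
    (n m : ℕ) (hx : x 0 - x N ≠ 0) (hy : y 0 - y M ≠ 0) (hxs : xs 0 - xs N ≠ 0)
    (hys : ys 0 - ys M ≠ 0) {X Y : ℝ} (hX1 : xs 0 ≤ X) (hX2 : X ≤ xs N)
    (hY1 : ys 0 ≤ Y) (hY2 : Y ≤ ys M) :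
    pMap N M x y z t a b n m (Lmap (x 0) (x N) (xs 0) (xs N) X)
        (Lmap (y 0) (y M) (ys 0) (ys M) Y)
      = pMap N M xs ys z t a b n m X Y := by
  have hxs' : xs N - xs 0 ≠ 0 := fun h => hxs (by linarith)
  have hys' : ys M - ys 0 ≠ 0 := fun h => hys (by linarith)
  have c00 : pMap N M x y z t a b n m (Lmap (x 0) (x N) (xs 0) (xs N) (xs 0))
      (Lmap (y 0) (y M) (ys 0) (ys M) (ys 0)) - pMap N M xs ys z t a b n m (xs 0) (ys 0) = 0 := by
    rw [Lmap_left, Lmap_left, pMap_corner_00' _ _ _ _ _ _ _ _ _ _ hx hy,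
      pMap_corner_00' _ _ _ _ _ _ _ _ _ _ hxs hys]
    ring
  have c0M : pMap N M x y z t a b n m (Lmap (x 0) (x N) (xs 0) (xs N) (xs 0))
      (Lmap (y 0) (y M) (ys 0) (ys M) (ys M)) - pMap N M xs ys z t a b n m (xs 0) (ys M) = 0 := by
    rw [Lmap_left, Lmap_right _ _ _ _ hys', pMap_corner_0M' _ _ _ _ _ _ _ _ _ _ hx hy,
      pMap_corner_0M' _ _ _ _ _ _ _ _ _ _ hxs hys]
    ring
  have cN0 : pMap N M x y z t a b n m (Lmap (x 0) (x N) (xs 0) (xs N) (xs N))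
      (Lmap (y 0) (y M) (ys 0) (ys M) (ys 0)) - pMap N M xs ys z t a b n m (xs N) (ys 0) = 0 := by
    rw [Lmap_right _ _ _ _ hxs', Lmap_left, pMap_corner_N0' _ _ _ _ _ _ _ _ _ _ hx hy,
      pMap_corner_N0' _ _ _ _ _ _ _ _ _ _ hxs hys]
    ring
  have cNM : pMap N M x y z t a b n m (Lmap (x 0) (x N) (xs 0) (xs N) (xs N))
      (Lmap (y 0) (y M) (ys 0) (ys M) (ys M)) - pMap N M xs ys z t a b n m (xs N) (ys M) = 0 := by
    rw [Lmap_right _ _ _ _ hxs', Lmap_right _ _ _ _ hys',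
      pMap_corner_NM' _ _ _ _ _ _ _ _ _ _ hx hy,
      pMap_corner_NM' _ _ _ _ _ _ _ _ _ _ hxs hys]
    ring
  have hb := bilin_abs_le
    (e := eCoef N M x y z t a b n m * ((x N - x 0)/(xs N - xs 0))
        + gCoef N M x y z t a b n m * ((x N - x 0)/(xs N - xs 0))
            * (y 0 - (y M - y 0)/(ys M - ys 0) * ys 0)
        - eCoef N M xs ys z t a b n m)
    (f := fCoef N M x y z t a b n m * ((y M - y 0)/(ys M - ys 0))
        + gCoef N M x y z t a b n m * (x 0 - (x N - x 0)/(xs N - xs 0) * xs 0)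
            * ((y M - y 0)/(ys M - ys 0))
        - fCoef N M xs ys z t a b n m)
    (g := gCoef N M x y z t a b n m * ((x N - x 0)/(xs N - xs 0))
            * ((y M - y 0)/(ys M - ys 0))
        - gCoef N M xs ys z t a b n m)
    (k := eCoef N M x y z t a b n m * (x 0 - (x N - x 0)/(xs N - xs 0) * xs 0)
        + fCoef N M x y z t a b n m * (y 0 - (y M - y 0)/(ys M - ys 0) * ys 0)
        + gCoef N M x y z t a b n m * (x 0 - (x N - x 0)/(xs N - xs 0) * xs 0)
            * (y 0 - (y M - y 0)/(ys M - ys 0) * ys 0)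
        + kCoef N M x y z t a b n m - kCoef N M xs ys z t a b n m)
    hX1 hX2 hY1 hY2
  rw [← pMap_transfer_form N M x y xs ys z t a b n m X Y,
      ← pMap_transfer_form N M x y xs ys z t a b n m (xs 0) (ys 0),
      ← pMap_transfer_form N M x y xs ys z t a b n m (xs 0) (ys M),
      ← pMap_transfer_form N M x y xs ys z t a b n m (xs N) (ys 0),
      ← pMap_transfer_form N M x y xs ys z t a b n m (xs N) (ys M)] at hb
  rw [c00, c0M, cN0, cNM] at hb
  simp only [abs_zero, max_self] at hb
  have h0 := abs_nonneg (pMap N M x y z t a b n m (Lmap (x 0) (x N) (xs 0) (xs N) X)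
        (Lmap (y 0) (y M) (ys 0) (ys M) Y) - pMap N M xs ys z t a b n m X Y)
  have : pMap N M x y z t a b n m (Lmap (x 0) (x N) (xs 0) (xs N) X)
        (Lmap (y 0) (y M) (ys 0) (ys M) Y) - pMap N M xs ys z t a b n m X Y = 0 :=
    abs_eq_zero.mp (le_antisymm hb h0)
  linarith [this]

lemma knots_le {N : ℕ} {x : ℕ → ℝ} (hx : ∀ i < N, x i < x (i+1)) :
    ∀ {i j : ℕ}, i ≤ j → j ≤ N → x i ≤ x j := by
  intro i j
  induction j with
  | zero => intro h1 _; have : i = 0 := by omega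
            rw [this]
  | succ k ih =>
    intro h1 h2
    by_cases h : i = k + 1
    · rw [h]
    · have ha := ih (by omega) (by omega)
      have hb := hx k (by omega)
      linarith

lemma knots_lt {N : ℕ} {x : ℕ → ℝ} (hx : ∀ i < N, x i < x (i+1)) {i j : ℕ}
    (hij : i < j) (hjN : j ≤ N) : x i < x j := by
  have h1 : x i ≤ x (j-1) := knots_le hx (by omega) (by omega)
  have h2 : x (j-1) < x (j-1+1) := hx (j-1) (by omega)
  have h3 : j - 1 + 1 = j := by omega
  rw [h3] at h2
  linarith

lemma telescope {N : ℕ} {x xs : ℕ → ℝ}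
    (hr : ∀ n, 1 ≤ n → n ≤ N →
      (x 0 - x N) / (xs 0 - xs N) = (x (n-1) - x n) / (xs (n-1) - xs n))
    (hxs : ∀ i < N, xs i < xs (i+1)) (hN : 1 ≤ N) :
    ∀ n ≤ N, (x n - x 0) * (xs N - xs 0) = (x N - x 0) * (xs n - xs 0) := by
  have hxs0N : xs 0 - xs N ≠ 0 := by
    have := knots_lt hxs (show 0 < N by omega) le_rfl; intro h; linarith
  intro n
  induction n with
  | zero => intro _; ring
  | succ k ih =>
    intro h
    have hk := ih (by omega)
    have hcell0 := hr (k+1) (by omega) h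
    have hd : xs (k+1-1) - xs (k+1) ≠ 0 := by
      have := hxs k (by omega)
      simp only [Nat.add_sub_cancel]
      intro hh; linarith
    have hcell : (x 0 - x N) * (xs (k+1-1) - xs (k+1))
        = (x (k+1-1) - x (k+1)) * (xs 0 - xs N) := (div_eq_div_iff hxs0N hd).mp hcell0
    simp only [Nat.add_sub_cancel] at hcell
    linear_combination hk - hcell

lemma Lmap_phi (N : ℕ) (x xs : ℕ → ℝ) (n : ℕ) (U : ℝ)
    (hxN : x N - x 0 ≠ 0) (hxsN : xs N - xs 0 ≠ 0)
    (h1 : (x n - x (n-1)) * (xs N - xs 0) = (x N - x 0) * (xs n - xs (n-1)))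
    (h2 : (x (n-1) - x 0) * (xs N - xs 0) = (x N - x 0) * (xs (n-1) - xs 0)) :
    Lmap (x 0) (x N) (xs 0) (xs N) (phiMap N xs n U)
      = phiMap N x n (Lmap (x 0) (x N) (xs 0) (xs N) U) := by
  have e1 : xs n = xs (n-1) + (x n - x (n-1)) * (xs N - xs 0) / (x N - x 0) := by
    field_simp
    linear_combination -h1
  have e2 : xs (n-1) = xs 0 + (x (n-1) - x 0) * (xs N - xs 0) / (x N - x 0) := by
    field_simp
    linear_combination -h2
  simp only [Lmap, phiMap]
  rw [e1, e2]
  field_simp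
  ring

lemma exists_cell {x : ℕ → ℝ} :
    ∀ (N : ℕ), 1 ≤ N → (∀ i < N, x i < x (i+1)) → ∀ X, x 0 ≤ X → X ≤ x N →
      ∃ n, 1 ≤ n ∧ n ≤ N ∧ x (n-1) ≤ X ∧ X ≤ x n := by
  intro N
  induction N with
  | zero => omega
  | succ k ih =>
    intro _ hx X h0 hX
    rcases Nat.eq_zero_or_pos k with hk | hk
    · subst hk
      exact ⟨1, le_rfl, le_rfl, by simpa using h0, by simpa using hX⟩
    · rcases le_total X (x k) with h | h
      · obtain ⟨n, hn1, hn2, hn3, hn4⟩ := ih hk (fun i hi => hx i (by omega)) X h0 h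
        exact ⟨n, hn1, by omega, hn3, hn4⟩
      · exact ⟨k+1, by omega, le_rfl, by simpa using h, hX⟩

lemma exists_phi_preimage {N : ℕ} {x : ℕ → ℝ} (hN : 1 ≤ N) (hx : ∀ i < N, x i < x (i+1))
    {X : ℝ} (hX1 : x 0 ≤ X) (hX2 : X ≤ x N) :
    ∃ n, 1 ≤ n ∧ n ≤ N ∧ ∃ U, x 0 ≤ U ∧ U ≤ x N ∧ phiMap N x n U = X := by
  obtain ⟨n, hn1, hn2, h3, h4⟩ := exists_cell N hN hx X hX1 hX2
  have hd : (0:ℝ) < x n - x (n-1) := by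
    have := knots_lt hx (show n-1 < n by omega) hn2; linarith
  have hD : (0:ℝ) < x N - x 0 := by
    have := knots_lt hx (show 0 < N by omega) le_rfl; linarith
  refine ⟨n, hn1, hn2, x 0 + (X - x (n-1)) * (x N - x 0) / (x n - x (n-1)), ?_, ?_, ?_⟩
  · have : 0 ≤ (X - x (n-1)) * (x N - x 0) / (x n - x (n-1)) :=
      div_nonneg (mul_nonneg (by linarith) (by linarith)) (by linarith)
    linarith
  · have : (X - x (n-1)) * (x N - x 0) / (x n - x (n-1)) ≤ x N - x 0 := by
      rw [div_le_iff₀ hd]; nlinarith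
    linarith
  · simp only [phiMap]
    field_simp
    ring

lemma contraction_bound {x0 xN y0 yM : ℝ} (hx : x0 ≤ xN) (hy : y0 ≤ yM)
    (D : ℝ → ℝ → ℝ)
    (hc : ContinuousOn (fun P : ℝ × ℝ => D P.1 P.2) (Icc x0 xN ×ˢ Icc y0 yM))
    {γ ρ : ℝ} (hγ0 : 0 ≤ γ) (hγ1 : γ < 1) (hρ : 0 ≤ ρ)
    (step : ∀ X ∈ Icc x0 xN, ∀ Y ∈ Icc y0 yM, ∃ U ∈ Icc x0 xN, ∃ V ∈ Icc y0 yM,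
      |D X Y| ≤ γ * |D U V| + ρ) :
    ∀ X ∈ Icc x0 xN, ∀ Y ∈ Icc y0 yM, |D X Y| ≤ ρ / (1 - γ) := by
  have hScomp : IsCompact (Icc x0 xN ×ˢ Icc y0 yM) := isCompact_Icc.prod isCompact_Icc
  have hSne : (Icc x0 xN ×ˢ Icc y0 yM).Nonempty :=
    ⟨(x0, y0), Set.mem_prod.2 ⟨⟨le_rfl, hx⟩, ⟨le_rfl, hy⟩⟩⟩
  have habs : ContinuousOn (fun P : ℝ × ℝ => |D P.1 P.2|) (Icc x0 xN ×ˢ Icc y0 yM) := hc.abs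
  set s := sSup ((fun P : ℝ × ℝ => |D P.1 P.2|) '' (Icc x0 xN ×ˢ Icc y0 yM)) with hs_def
  have hbdd : BddAbove ((fun P : ℝ × ℝ => |D P.1 P.2|) '' (Icc x0 xN ×ˢ Icc y0 yM)) :=
    (hScomp.image_of_continuousOn habs).bddAbove
  have hles : ∀ X ∈ Icc x0 xN, ∀ Y ∈ Icc y0 yM, |D X Y| ≤ s := by
    intro X hX Y hY
    exact le_csSup hbdd ⟨(X, Y), Set.mem_prod.2 ⟨hX, hY⟩, rfl⟩
  have hs : s ≤ γ * s + ρ := by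
    apply csSup_le (hSne.image _)
    rintro v ⟨⟨X, Y⟩, hXY, rfl⟩
    obtain ⟨hX, hY⟩ := Set.mem_prod.1 hXY
    obtain ⟨U, hU, V, hV, h⟩ := step X hX Y hY
    have h2 := hles U hU V hV
    simp only
    nlinarith
  intro X hX Y hY
  have h1 := hles X hX Y hY
  rw [le_div_iff₀ (by linarith : (0:ℝ) < 1 - γ)]
  nlinarith

lemma corner_diff_bound {A A' B B' C C' aa bb α β sz st : ℝ}
    (hα : |aa| ≤ α) (hβ : |bb| ≤ β) (h1 : |A - A'| ≤ sz) (h2 : |B - B'| ≤ sz)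
    (h3 : |C - C'| ≤ st) :
    |(A - aa*B - bb*C) - (A' - aa*B' - bb*C')| ≤ (1 + α) * sz + β * st := by
  have e : (A - aa*B - bb*C) - (A' - aa*B' - bb*C')
      = ((A - A') - aa*(B - B')) - bb*(C - C') := by ring
  rw [e]
  have u1 := abs_sub ((A - A') - aa*(B - B')) (bb*(C - C'))
  have u2 := abs_sub (A - A') (aa*(B - B'))
  rw [abs_mul] at u1 u2
  have v1 : |aa| * |B - B'| ≤ α * sz :=
    mul_le_mul hα h2 (abs_nonneg _) ((abs_nonneg _).trans hα)
  have v2 : |bb| * |C - C'| ≤ β * st :=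
    mul_le_mul hβ h3 (abs_nonneg _) ((abs_nonneg _).trans hβ)
  linarith

lemma pMap_data_diff_bound (N M : ℕ) (x y : ℕ → ℝ) (z t z' t' : ℕ → ℕ → ℝ)
    (a b : ℕ → ℕ → ℝ) (n m : ℕ) (hx : x 0 - x N ≠ 0) (hy : y 0 - y M ≠ 0)
    (nN : n ≤ N) (mM : m ≤ M)
    {α β sz st : ℝ} (hα : |a n m| ≤ α) (hβ : |b n m| ≤ β)
    (hz : ∀ i ≤ N, ∀ j ≤ M, |z i j - z' i j| ≤ sz)
    (ht : ∀ i ≤ N, ∀ j ≤ M, |t i j - t' i j| ≤ st)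
    {X Y : ℝ} (hX1 : x 0 ≤ X) (hX2 : X ≤ x N) (hY1 : y 0 ≤ Y) (hY2 : Y ≤ y M) :
    |pMap N M x y z t a b n m X Y - pMap N M x y z' t' a b n m X Y|
      ≤ (1 + α) * sz + β * st := by
  have key : ∀ U V : ℝ, pMap N M x y z t a b n m U V - pMap N M x y z' t' a b n m U V
      = (eCoef N M x y z t a b n m - eCoef N M x y z' t' a b n m) * U
      + (fCoef N M x y z t a b n m - fCoef N M x y z' t' a b n m) * V
      + (gCoef N M x y z t a b n m - gCoef N M x y z' t' a b n m) * U * V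
      + (kCoef N M x y z t a b n m - kCoef N M x y z' t' a b n m) := by
    intro U V; simp only [pMap]; ring
  have hb := bilin_abs_le
    (e := eCoef N M x y z t a b n m - eCoef N M x y z' t' a b n m)
    (f := fCoef N M x y z t a b n m - fCoef N M x y z' t' a b n m)
    (g := gCoef N M x y z t a b n m - gCoef N M x y z' t' a b n m)
    (k := kCoef N M x y z t a b n m - kCoef N M x y z' t' a b n m)
    hX1 hX2 hY1 hY2
  rw [← key X Y, ← key (x 0) (y 0), ← key (x 0) (y M), ← key (x N) (y 0),
      ← key (x N) (y M)] at hb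
  refine hb.trans (max_le (max_le ?_ ?_) (max_le ?_ ?_))
  · rw [pMap_corner_00' _ _ _ _ _ _ _ _ _ _ hx hy, pMap_corner_00' _ _ _ _ _ _ _ _ _ _ hx hy]
    exact corner_diff_bound hα hβ (hz (n-1) (by omega) (m-1) (by omega))
      (hz 0 (by omega) 0 (by omega)) (ht 0 (by omega) 0 (by omega))
  · rw [pMap_corner_0M' _ _ _ _ _ _ _ _ _ _ hx hy, pMap_corner_0M' _ _ _ _ _ _ _ _ _ _ hx hy]
    exact corner_diff_bound hα hβ (hz (n-1) (by omega) m mM)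
      (hz 0 (by omega) M (by omega)) (ht 0 (by omega) M (by omega))
  · rw [pMap_corner_N0' _ _ _ _ _ _ _ _ _ _ hx hy, pMap_corner_N0' _ _ _ _ _ _ _ _ _ _ hx hy]
    exact corner_diff_bound hα hβ (hz n nN (m-1) (by omega))
      (hz N (by omega) 0 (by omega)) (ht N (by omega) 0 (by omega))
  · rw [pMap_corner_NM' _ _ _ _ _ _ _ _ _ _ hx hy, pMap_corner_NM' _ _ _ _ _ _ _ _ _ _ hx hy]
    exact corner_diff_bound hα hβ (hz n nN m mM)
      (hz N (by omega) M (by omega)) (ht N (by omega) M (by omega))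

/- ### Facts about the finite suprema -/

lemma supParam_finite (N M : ℕ) (a : ℕ → ℕ → ℝ) :
    {v : ℝ | ∃ n m, 1 ≤ n ∧ n ≤ N ∧ 1 ≤ m ∧ m ≤ M ∧ v = |a n m|}.Finite := by
  apply Set.Finite.subset (Set.Finite.image (fun p : ℕ × ℕ => |a p.1 p.2|)
    ((Set.finite_Iic N).prod (Set.finite_Iic M)))
  rintro v ⟨n, m, _, hn, _, hm, rfl⟩
  exact ⟨(n, m), Set.mem_prod.2 ⟨hn, hm⟩, rfl⟩

lemma supParam_nonempty (N M : ℕ) (a : ℕ → ℕ → ℝ) (hN : 1 ≤ N) (hM : 1 ≤ M) :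
    {v : ℝ | ∃ n m, 1 ≤ n ∧ n ≤ N ∧ 1 ≤ m ∧ m ≤ M ∧ v = |a n m|}.Nonempty :=
  ⟨|a 1 1|, 1, 1, le_rfl, hN, le_rfl, hM, rfl⟩

lemma le_supParam {N M : ℕ} {a : ℕ → ℕ → ℝ} {n m : ℕ}
    (hn1 : 1 ≤ n) (hnN : n ≤ N) (hm1 : 1 ≤ m) (hmM : m ≤ M) :
    |a n m| ≤ supParam N M a :=
  le_csSup (supParam_finite N M a).bddAbove ⟨n, m, hn1, hnN, hm1, hmM, rfl⟩

lemma supParam_nonneg {N M : ℕ} {a : ℕ → ℕ → ℝ} (hN : 1 ≤ N) (hM : 1 ≤ M) :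
    0 ≤ supParam N M a :=
  (abs_nonneg _).trans (le_supParam le_rfl hN le_rfl hM)

lemma supParam_lt_one {N M : ℕ} {a : ℕ → ℕ → ℝ} (hN : 1 ≤ N) (hM : 1 ≤ M)
    (h : ∀ n m, 1 ≤ n → n ≤ N → 1 ≤ m → m ≤ M → |a n m| < 1) :
    supParam N M a < 1 := by
  have hmem := (supParam_nonempty N M a hN hM).csSup_mem (supParam_finite N M a)
  obtain ⟨n, m, hn1, hnN, hm1, hmM, he⟩ := hmem
  rw [supParam, he]
  exact h n m hn1 hnN hm1 hmM

lemma supValDiff_finite (N M : ℕ) (z zs : ℕ → ℕ → ℝ) :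
    {v : ℝ | ∃ n m, n ≤ N ∧ m ≤ M ∧ v = |z n m - zs n m|}.Finite := by
  apply Set.Finite.subset (Set.Finite.image (fun p : ℕ × ℕ => |z p.1 p.2 - zs p.1 p.2|)
    ((Set.finite_Iic N).prod (Set.finite_Iic M)))
  rintro v ⟨n, m, hn, hm, rfl⟩
  exact ⟨(n, m), Set.mem_prod.2 ⟨hn, hm⟩, rfl⟩

lemma le_supValDiff {N M : ℕ} {z zs : ℕ → ℕ → ℝ} {n m : ℕ} (hn : n ≤ N) (hm : m ≤ M) :
    |z n m - zs n m| ≤ supValDiff N M z zs :=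
  le_csSup (supValDiff_finite N M z zs).bddAbove ⟨n, m, hn, hm, rfl⟩

lemma supValDiff_nonneg (N M : ℕ) (z zs : ℕ → ℕ → ℝ) : 0 ≤ supValDiff N M z zs :=
  (abs_nonneg _).trans (le_supValDiff (Nat.zero_le N) (Nat.zero_le M))

lemma supKnotDiff_finite (N M : ℕ) (x xs y ys : ℕ → ℝ) (d : ℝ) :
    {v : ℝ | ∃ n m, n ≤ N ∧ m ≤ M ∧ v = (|x n - xs n| + |y m - ys m|) ^ d}.Finite := by
  apply Set.Finite.subset (Set.Finite.image
    (fun p : ℕ × ℕ => (|x p.1 - xs p.1| + |y p.2 - ys p.2|) ^ d)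
    ((Set.finite_Iic N).prod (Set.finite_Iic M)))
  rintro v ⟨n, m, hn, hm, rfl⟩
  exact ⟨(n, m), Set.mem_prod.2 ⟨hn, hm⟩, rfl⟩

lemma le_supKnotDiff {N M : ℕ} {x xs y ys : ℕ → ℝ} {d : ℝ} {n m : ℕ}
    (hn : n ≤ N) (hm : m ≤ M) :
    (|x n - xs n| + |y m - ys m|) ^ d ≤ supKnotDiff N M x xs y ys d :=
  le_csSup (supKnotDiff_finite N M x xs y ys d).bddAbove ⟨n, m, hn, hm, rfl⟩

lemma supKnotDiff_nonneg (N M : ℕ) (x xs y ys : ℕ → ℝ) (d : ℝ) :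
    0 ≤ supKnotDiff N M x xs y ys d :=
  (Real.rpow_nonneg (by positivity) d).trans (le_supKnotDiff (Nat.zero_le N) (Nat.zero_le M))

set_option maxHeartbeats 4000000 in
/-- the main stability theorem, `‖F₁ - G₁‖_∞ ≤ d(Δ, Δ*)` on `S*`, for a
simultaneous perturbation of all the variables. -/
theorem chfis_stability_main (N M : ℕ) (x y xs ys : ℕ → ℝ) (z zs t ts : ℕ → ℕ → ℝ)
    (a b c : ℕ → ℕ → ℝ)
    (hD : DataOK N M x y a b c) (hDs : DataOK N M xs ys a b c)
    (hratio : RatioInv N M x y xs ys)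
    (hsub : Icc (xs 0) (xs N) ×ˢ Icc (ys 0) (ys M) ⊆ Icc (x 0) (x N) ×ˢ Icc (y 0) (y M))
    (F₁ F₂ G₁ G₂ P₁ P₂ Q₁ Q₂ : ℝ → ℝ → ℝ)
    (hF : IsCHFIS N M x y z t a b c F₁ F₂)
    (hG : IsCHFIS N M xs ys zs ts a b c G₁ G₂)
    (hP : IsCHFIS N M x y z ts a b c P₁ P₂)
    (hQ : IsCHFIS N M x y zs ts a b c Q₁ Q₂)
    (Mb δ : ℝ) (hMb : 0 ≤ Mb) (hδ : δ ∈ Set.Ioc (0:ℝ) 1)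
    (hH1 : ∀ X ∈ Icc (x 0) (x N), ∀ Y ∈ Icc (y 0) (y M),
      ∀ X' ∈ Icc (x 0) (x N), ∀ Y' ∈ Icc (y 0) (y M),
        |Q₁ X Y - Q₁ X' Y'| ≤ Mb * (|X - X'| + |Y - Y'|) ^ δ)
    (hH2 : ∀ X ∈ Icc (x 0) (x N), ∀ Y ∈ Icc (y 0) (y M),
      ∀ X' ∈ Icc (x 0) (x N), ∀ Y' ∈ Icc (y 0) (y M),
        |Q₂ X Y - Q₂ X' Y'| ≤ Mb * (|X - X'| + |Y - Y'|) ^ δ) :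
    ∀ X ∈ Icc (xs 0) (xs N), ∀ Y ∈ Icc (ys 0) (ys M),
      |F₁ X Y - G₁ X Y| ≤
        8 * supParam N M b / ((1 - supParam N M a) * (1 - supParam N M c))
            * supValDiff N M t ts
        + 4 * (1 + supParam N M a) / (1 - supParam N M a) * supValDiff N M z zs
        + (2 * supParam N M b * supParam N M c
              / ((1 - supParam N M a) * (1 - supParam N M c))
            + (1 + supParam N M a) / (1 - supParam N M a))
          * Mb * supKnotDiff N M x xs y ys δ := by
  obtain ⟨hN, hM, hx, hy, ha, hbc⟩ := hD
  obtain ⟨-, -, hxs, hys, -, -⟩ := hDs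
  -- knot facts
  have hx0N : x 0 < x N := knots_lt hx (by omega) le_rfl
  have hy0M : y 0 < y M := knots_lt hy (by omega) le_rfl
  have hxs0N : xs 0 < xs N := knots_lt hxs (by omega) le_rfl
  have hys0M : ys 0 < ys M := knots_lt hys (by omega) le_rfl
  have hxne : x 0 - x N ≠ 0 := by intro h; linarith
  have hyne : y 0 - y M ≠ 0 := by intro h; linarith
  have hxsne : xs 0 - xs N ≠ 0 := by intro h; linarith
  have hysne : ys 0 - ys M ≠ 0 := by intro h; linarith
  -- parameters
  set α := supParam N M a with hα_def
  set β := supParam N M b with hβ_def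
  set γ := supParam N M c with hγ_def
  have hα1 : α < 1 := supParam_lt_one hN hM ha
  have hγ1 : γ < 1 := supParam_lt_one hN hM (fun n m h1 h2 h3 h4 =>
    (le_add_of_nonneg_left (abs_nonneg (b n m))).trans_lt (hbc n m h1 h2 h3 h4))
  have hα0 : 0 ≤ α := supParam_nonneg hN hM
  have hβ0 : 0 ≤ β := supParam_nonneg hN hM
  have hγ0 : 0 ≤ γ := supParam_nonneg hN hM
  have haα : ∀ n m, 1 ≤ n → n ≤ N → 1 ≤ m → m ≤ M → |a n m| ≤ α :=
    fun n m h1 h2 h3 h4 => le_supParam h1 h2 h3 h4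
  have hbβ : ∀ n m, 1 ≤ n → n ≤ N → 1 ≤ m → m ≤ M → |b n m| ≤ β :=
    fun n m h1 h2 h3 h4 => le_supParam h1 h2 h3 h4
  have hcγ : ∀ n m, 1 ≤ n → n ≤ N → 1 ≤ m → m ≤ M → |c n m| ≤ γ :=
    fun n m h1 h2 h3 h4 => le_supParam h1 h2 h3 h4
  -- sups of data differences
  set st := supValDiff N M t ts with hst_def
  set sz := supValDiff N M z zs with hsz_def
  set sK := supKnotDiff N M x xs y ys δ with hsK_def
  have hst : ∀ i ≤ N, ∀ j ≤ M, |t i j - ts i j| ≤ st := fun i hi j hj => le_supValDiff hi hj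
  have hsz : ∀ i ≤ N, ∀ j ≤ M, |z i j - zs i j| ≤ sz := fun i hi j hj => le_supValDiff hi hj
  have hzz : ∀ i ≤ N, ∀ j ≤ M, |z i j - z i j| ≤ (0:ℝ) := by intro i _ j _; simp
  have htt : ∀ i ≤ N, ∀ j ≤ M, |ts i j - ts i j| ≤ (0:ℝ) := by intro i _ j _; simp
  have hst0 : 0 ≤ st := supValDiff_nonneg N M t ts
  have hsz0 : 0 ≤ sz := supValDiff_nonneg N M z zs
  have hsK0 : 0 ≤ sK := supKnotDiff_nonneg N M x xs y ys δ
  have hzero : |(fun _ _ : ℕ => (0:ℝ)) 1 1| ≤ (0:ℝ) := by simp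
  -- ratio facts
  have hcellx : ∀ n, 1 ≤ n → n ≤ N →
      (x n - x (n-1)) * (xs N - xs 0) = (x N - x 0) * (xs n - xs (n-1)) := by
    intro n hn1 hnN
    have hd : xs (n-1) - xs n ≠ 0 := by
      have := knots_lt hxs (show n-1 < n by omega) hnN; intro h; linarith
    have hcell := (div_eq_div_iff hxsne hd).mp (hratio.1 n hn1 hnN)
    linear_combination -hcell
  have hcelly : ∀ m, 1 ≤ m → m ≤ M →
      (y m - y (m-1)) * (ys M - ys 0) = (y M - y 0) * (ys m - ys (m-1)) := by
    intro m hm1 hmM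
    have hd : ys (m-1) - ys m ≠ 0 := by
      have := knots_lt hys (show m-1 < m by omega) hmM; intro h; linarith
    have hcell := (div_eq_div_iff hysne hd).mp (hratio.2 m hm1 hmM)
    linear_combination -hcell
  have htelx := telescope hratio.1 hxs hN
  have htely := telescope hratio.2 hys hM
  have hcomX : ∀ n, 1 ≤ n → n ≤ N → ∀ U : ℝ,
      Lmap (x 0) (x N) (xs 0) (xs N) (phiMap N xs n U)
        = phiMap N x n (Lmap (x 0) (x N) (xs 0) (xs N) U) := by
    intro n hn1 hnN U
    exact Lmap_phi N x xs n U (by intro h; linarith) (by intro h; linarith)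
      (hcellx n hn1 hnN) (htelx (n-1) (by omega))
  have hcomY : ∀ m, 1 ≤ m → m ≤ M → ∀ V : ℝ,
      Lmap (y 0) (y M) (ys 0) (ys M) (phiMap M ys m V)
        = phiMap M y m (Lmap (y 0) (y M) (ys 0) (ys M) V) := by
    intro m hm1 hmM V
    exact Lmap_phi M y ys m V (by intro h; linarith) (by intro h; linarith)
      (hcelly m hm1 hmM) (htely (m-1) (by omega))
  have hLmem : ∀ {X : ℝ}, xs 0 ≤ X → X ≤ xs N →
      Lmap (x 0) (x N) (xs 0) (xs N) X ∈ Icc (x 0) (x N) :=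
    fun h1 h2 => Lmap_mem hx0N.le hxs0N h1 h2
  have hL'mem : ∀ {Y : ℝ}, ys 0 ≤ Y → Y ≤ ys M →
      Lmap (y 0) (y M) (ys 0) (ys M) Y ∈ Icc (y 0) (y M) :=
    fun h1 h2 => Lmap_mem hy0M.le hys0M h1 h2
  -- Step A : |F₂ - P₂| ≤ (1+γ)st/(1-γ) on S
  have hA : ∀ X ∈ Icc (x 0) (x N), ∀ Y ∈ Icc (y 0) (y M),
      |F₂ X Y - P₂ X Y| ≤ ((1+γ)*st + 0*st)/(1-γ) := by
    apply contraction_bound hx0N.le hy0M.le (fun X Y => F₂ X Y - P₂ X Y)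
      (hF.2.1.sub hP.2.1) hγ0 hγ1 (by nlinarith)
    intro X hX Y hY
    obtain ⟨n, hn1, hnN, U, hU1, hU2, hUeq⟩ := exists_phi_preimage hN hx hX.1 hX.2
    obtain ⟨m, hm1, hmM, V, hV1, hV2, hVeq⟩ := exists_phi_preimage hM hy hY.1 hY.2
    refine ⟨U, ⟨hU1, hU2⟩, V, ⟨hV1, hV2⟩, ?_⟩
    have heq : F₂ X Y - P₂ X Y = c n m * (F₂ U V - P₂ U V)
        + (pMap N M x y t t c (fun _ _ => 0) n m U V
            - pMap N M x y ts ts c (fun _ _ => 0) n m U V) := by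
      rw [← hUeq, ← hVeq,
        (hF.2.2.2 n m hn1 hnN hm1 hmM U ⟨hU1, hU2⟩ V ⟨hV1, hV2⟩).2,
        (hP.2.2.2 n m hn1 hnN hm1 hmM U ⟨hU1, hU2⟩ V ⟨hV1, hV2⟩).2]
      simp only [qMap]
      ring
    have hq := pMap_data_diff_bound N M x y t t ts ts c (fun _ _ => 0) n m hxne hyne
      hnN hmM (hcγ n m hn1 hnN hm1 hmM) hzero hst hst hU1 hU2 hV1 hV2
    have h1 := abs_add_le (c n m * (F₂ U V - P₂ U V))
      (pMap N M x y t t c (fun _ _ => 0) n m U V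
        - pMap N M x y ts ts c (fun _ _ => 0) n m U V)
    rw [abs_mul] at h1
    have h2 : |c n m| * |F₂ U V - P₂ U V| ≤ γ * |F₂ U V - P₂ U V| :=
      mul_le_mul_of_nonneg_right (hcγ n m hn1 hnN hm1 hmM) (abs_nonneg _)
    rw [heq]
    linarith
  -- Step B : |F₁ - P₁| on S
  have hB : ∀ X ∈ Icc (x 0) (x N), ∀ Y ∈ Icc (y 0) (y M),
      |F₁ X Y - P₁ X Y|
        ≤ (β * (((1+γ)*st + 0*st)/(1-γ)) + ((1+α)*0 + β*st))/(1-α) := by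
    apply contraction_bound hx0N.le hy0M.le (fun X Y => F₁ X Y - P₁ X Y)
      (hF.1.sub hP.1) hα0 hα1 (by
        have hq0 : 0 ≤ ((1+γ)*st + 0*st)/(1-γ) := div_nonneg (by nlinarith) (by linarith)
        nlinarith [mul_nonneg hβ0 hq0, mul_nonneg hβ0 hst0])
    intro X hX Y hY
    obtain ⟨n, hn1, hnN, U, hU1, hU2, hUeq⟩ := exists_phi_preimage hN hx hX.1 hX.2
    obtain ⟨m, hm1, hmM, V, hV1, hV2, hVeq⟩ := exists_phi_preimage hM hy hY.1 hY.2
    refine ⟨U, ⟨hU1, hU2⟩, V, ⟨hV1, hV2⟩, ?_⟩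
    have heq : F₁ X Y - P₁ X Y = a n m * (F₁ U V - P₁ U V)
        + b n m * (F₂ U V - P₂ U V)
        + (pMap N M x y z t a b n m U V - pMap N M x y z ts a b n m U V) := by
      rw [← hUeq, ← hVeq,
        (hF.2.2.2 n m hn1 hnN hm1 hmM U ⟨hU1, hU2⟩ V ⟨hV1, hV2⟩).1,
        (hP.2.2.2 n m hn1 hnN hm1 hmM U ⟨hU1, hU2⟩ V ⟨hV1, hV2⟩).1]
      ring
    have hq := pMap_data_diff_bound N M x y z t z ts a b n m hxne hyne
      hnN hmM (haα n m hn1 hnN hm1 hmM) (hbβ n m hn1 hnN hm1 hmM) hzz hst hU1 hU2 hV1 hV2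
    have hA' := hA U ⟨hU1, hU2⟩ V ⟨hV1, hV2⟩
    have h1 := abs_add_le (a n m * (F₁ U V - P₁ U V) + b n m * (F₂ U V - P₂ U V))
      (pMap N M x y z t a b n m U V - pMap N M x y z ts a b n m U V)
    have h2 := abs_add_le (a n m * (F₁ U V - P₁ U V)) (b n m * (F₂ U V - P₂ U V))
    rw [abs_mul] at h2
    rw [abs_mul (b n m)] at h2
    have h3 : |a n m| * |F₁ U V - P₁ U V| ≤ α * |F₁ U V - P₁ U V| :=
      mul_le_mul_of_nonneg_right (haα n m hn1 hnN hm1 hmM) (abs_nonneg _)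
    have h4 : |b n m| * |F₂ U V - P₂ U V| ≤ β * (((1+γ)*st + 0*st)/(1-γ)) := by
      have := mul_le_mul (hbβ n m hn1 hnN hm1 hmM) hA' (abs_nonneg _) hβ0
      linarith
    rw [heq]
    linarith
  -- Step C : P₂ = Q₂ on S
  have hC : ∀ X ∈ Icc (x 0) (x N), ∀ Y ∈ Icc (y 0) (y M), P₂ X Y = Q₂ X Y := by
    have hC0 : ∀ X ∈ Icc (x 0) (x N), ∀ Y ∈ Icc (y 0) (y M),
        |P₂ X Y - Q₂ X Y| ≤ 0/(1-γ) := by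
      apply contraction_bound hx0N.le hy0M.le (fun X Y => P₂ X Y - Q₂ X Y)
        (hP.2.1.sub hQ.2.1) hγ0 hγ1 le_rfl
      intro X hX Y hY
      obtain ⟨n, hn1, hnN, U, hU1, hU2, hUeq⟩ := exists_phi_preimage hN hx hX.1 hX.2
      obtain ⟨m, hm1, hmM, V, hV1, hV2, hVeq⟩ := exists_phi_preimage hM hy hY.1 hY.2
      refine ⟨U, ⟨hU1, hU2⟩, V, ⟨hV1, hV2⟩, ?_⟩
      have heq : P₂ X Y - Q₂ X Y = c n m * (P₂ U V - Q₂ U V) := by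
        rw [← hUeq, ← hVeq,
          (hP.2.2.2 n m hn1 hnN hm1 hmM U ⟨hU1, hU2⟩ V ⟨hV1, hV2⟩).2,
          (hQ.2.2.2 n m hn1 hnN hm1 hmM U ⟨hU1, hU2⟩ V ⟨hV1, hV2⟩).2]
        ring
      have h2 : |c n m| * |P₂ U V - Q₂ U V| ≤ γ * |P₂ U V - Q₂ U V| :=
        mul_le_mul_of_nonneg_right (hcγ n m hn1 hnN hm1 hmM) (abs_nonneg _)
      rw [heq, abs_mul]
      linarith
    intro X hX Y hY
    have h := hC0 X hX Y hY
    rw [zero_div] at h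
    have := abs_nonneg (P₂ X Y - Q₂ X Y)
    have : |P₂ X Y - Q₂ X Y| = 0 := le_antisymm h this
    have := abs_eq_zero.mp this
    linarith
  -- Step D : |P₁ - Q₁| on S
  have hD1 : ∀ X ∈ Icc (x 0) (x N), ∀ Y ∈ Icc (y 0) (y M),
      |P₁ X Y - Q₁ X Y| ≤ ((1+α)*sz + β*0)/(1-α) := by
    apply contraction_bound hx0N.le hy0M.le (fun X Y => P₁ X Y - Q₁ X Y)
      (hP.1.sub hQ.1) hα0 hα1 (by nlinarith)
    intro X hX Y hY
    obtain ⟨n, hn1, hnN, U, hU1, hU2, hUeq⟩ := exists_phi_preimage hN hx hX.1 hX.2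
    obtain ⟨m, hm1, hmM, V, hV1, hV2, hVeq⟩ := exists_phi_preimage hM hy hY.1 hY.2
    refine ⟨U, ⟨hU1, hU2⟩, V, ⟨hV1, hV2⟩, ?_⟩
    have hPQ2 : P₂ U V = Q₂ U V := hC U ⟨hU1, hU2⟩ V ⟨hV1, hV2⟩
    have heq : P₁ X Y - Q₁ X Y = a n m * (P₁ U V - Q₁ U V)
        + (pMap N M x y z ts a b n m U V - pMap N M x y zs ts a b n m U V) := by
      rw [← hUeq, ← hVeq,
        (hP.2.2.2 n m hn1 hnN hm1 hmM U ⟨hU1, hU2⟩ V ⟨hV1, hV2⟩).1,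
        (hQ.2.2.2 n m hn1 hnN hm1 hmM U ⟨hU1, hU2⟩ V ⟨hV1, hV2⟩).1, hPQ2]
      ring
    have hq := pMap_data_diff_bound N M x y z ts zs ts a b n m hxne hyne
      hnN hmM (haα n m hn1 hnN hm1 hmM) (hbβ n m hn1 hnN hm1 hmM) hsz htt hU1 hU2 hV1 hV2
    have h1 := abs_add_le (a n m * (P₁ U V - Q₁ U V))
      (pMap N M x y z ts a b n m U V - pMap N M x y zs ts a b n m U V)
    rw [abs_mul] at h1
    have h3 : |a n m| * |P₁ U V - Q₁ U V| ≤ α * |P₁ U V - Q₁ U V| :=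
      mul_le_mul_of_nonneg_right (haα n m hn1 hnN hm1 hmM) (abs_nonneg _)
    rw [heq]
    linarith
  -- continuity of the transfer maps
  have hLc : Continuous (fun X : ℝ => Lmap (x 0) (x N) (xs 0) (xs N) X) := by
    simp only [Lmap]
    exact continuous_const.add ((continuous_const.mul (continuous_sub_right (xs 0))).div_const _)
  have hL'c : Continuous (fun Y : ℝ => Lmap (y 0) (y M) (ys 0) (ys M) Y) := by
    simp only [Lmap]
    exact continuous_const.add ((continuous_const.mul (continuous_sub_right (ys 0))).div_const _)
  have hQ2L : ContinuousOn (fun P : ℝ × ℝ =>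
      Q₂ (Lmap (x 0) (x N) (xs 0) (xs N) P.1) (Lmap (y 0) (y M) (ys 0) (ys M) P.2))
      (Icc (xs 0) (xs N) ×ˢ Icc (ys 0) (ys M)) := by
    apply ContinuousOn.comp hQ.2.1
      ((hLc.comp continuous_fst).prodMk (hL'c.comp continuous_snd)).continuousOn
    intro P hP
    obtain ⟨h1, h2⟩ := Set.mem_prod.1 hP
    exact Set.mem_prod.2 ⟨hLmem h1.1 h1.2, hL'mem h2.1 h2.2⟩
  have hQ1L : ContinuousOn (fun P : ℝ × ℝ =>
      Q₁ (Lmap (x 0) (x N) (xs 0) (xs N) P.1) (Lmap (y 0) (y M) (ys 0) (ys M) P.2))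
      (Icc (xs 0) (xs N) ×ˢ Icc (ys 0) (ys M)) := by
    apply ContinuousOn.comp hQ.1
      ((hLc.comp continuous_fst).prodMk (hL'c.comp continuous_snd)).continuousOn
    intro P hP
    obtain ⟨h1, h2⟩ := Set.mem_prod.1 hP
    exact Set.mem_prod.2 ⟨hLmem h1.1 h1.2, hL'mem h2.1 h2.2⟩
  -- Step E : Q₂ ∘ transfer = G₂ on S*
  have hE : ∀ X ∈ Icc (xs 0) (xs N), ∀ Y ∈ Icc (ys 0) (ys M),
      Q₂ (Lmap (x 0) (x N) (xs 0) (xs N) X) (Lmap (y 0) (y M) (ys 0) (ys M) Y) = G₂ X Y := by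
    have hE0 : ∀ X ∈ Icc (xs 0) (xs N), ∀ Y ∈ Icc (ys 0) (ys M),
        |Q₂ (Lmap (x 0) (x N) (xs 0) (xs N) X) (Lmap (y 0) (y M) (ys 0) (ys M) Y) - G₂ X Y|
          ≤ 0/(1-γ) := by
      apply contraction_bound hxs0N.le hys0M.le
        (fun X Y => Q₂ (Lmap (x 0) (x N) (xs 0) (xs N) X)
          (Lmap (y 0) (y M) (ys 0) (ys M) Y) - G₂ X Y)
        (hQ2L.sub hG.2.1) hγ0 hγ1 le_rfl
      intro X hX Y hY
      obtain ⟨n, hn1, hnN, U, hU1, hU2, hUeq⟩ := exists_phi_preimage hN hxs hX.1 hX.2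
      obtain ⟨m, hm1, hmM, V, hV1, hV2, hVeq⟩ := exists_phi_preimage hM hys hY.1 hY.2
      refine ⟨U, ⟨hU1, hU2⟩, V, ⟨hV1, hV2⟩, ?_⟩
      have hLU := hLmem hU1 hU2
      have hLV := hL'mem hV1 hV2
      have htr := pMap_transfer N M x y xs ys ts ts c (fun _ _ => 0) n m hxne hyne
        hxsne hysne hU1 hU2 hV1 hV2
      have heq : Q₂ (Lmap (x 0) (x N) (xs 0) (xs N) X) (Lmap (y 0) (y M) (ys 0) (ys M) Y)
          - G₂ X Y = c n m * (Q₂ (Lmap (x 0) (x N) (xs 0) (xs N) U)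
            (Lmap (y 0) (y M) (ys 0) (ys M) V) - G₂ U V) := by
        rw [← hUeq, ← hVeq, hcomX n hn1 hnN U, hcomY m hm1 hmM V,
          (hQ.2.2.2 n m hn1 hnN hm1 hmM _ hLU _ hLV).2,
          (hG.2.2.2 n m hn1 hnN hm1 hmM U ⟨hU1, hU2⟩ V ⟨hV1, hV2⟩).2]
        simp only [qMap]
        rw [htr]
        ring
      have h2 : |c n m| * |Q₂ (Lmap (x 0) (x N) (xs 0) (xs N) U)
          (Lmap (y 0) (y M) (ys 0) (ys M) V) - G₂ U V| ≤ γ * |Q₂ (Lmap (x 0) (x N) (xs 0) (xs N) U)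
          (Lmap (y 0) (y M) (ys 0) (ys M) V) - G₂ U V| :=
        mul_le_mul_of_nonneg_right (hcγ n m hn1 hnN hm1 hmM) (abs_nonneg _)
      rw [heq, abs_mul]
      linarith
    intro X hX Y hY
    have h := hE0 X hX Y hY
    rw [zero_div] at h
    have h0 := abs_nonneg (Q₂ (Lmap (x 0) (x N) (xs 0) (xs N) X)
      (Lmap (y 0) (y M) (ys 0) (ys M) Y) - G₂ X Y)
    have := abs_eq_zero.mp (le_antisymm h h0)
    linarith
  -- Step F : Q₁ ∘ transfer = G₁ on S*
  have hFG : ∀ X ∈ Icc (xs 0) (xs N), ∀ Y ∈ Icc (ys 0) (ys M),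
      Q₁ (Lmap (x 0) (x N) (xs 0) (xs N) X) (Lmap (y 0) (y M) (ys 0) (ys M) Y) = G₁ X Y := by
    have hF0 : ∀ X ∈ Icc (xs 0) (xs N), ∀ Y ∈ Icc (ys 0) (ys M),
        |Q₁ (Lmap (x 0) (x N) (xs 0) (xs N) X) (Lmap (y 0) (y M) (ys 0) (ys M) Y) - G₁ X Y|
          ≤ 0/(1-α) := by
      apply contraction_bound hxs0N.le hys0M.le
        (fun X Y => Q₁ (Lmap (x 0) (x N) (xs 0) (xs N) X)
          (Lmap (y 0) (y M) (ys 0) (ys M) Y) - G₁ X Y)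
        (hQ1L.sub hG.1) hα0 hα1 le_rfl
      intro X hX Y hY
      obtain ⟨n, hn1, hnN, U, hU1, hU2, hUeq⟩ := exists_phi_preimage hN hxs hX.1 hX.2
      obtain ⟨m, hm1, hmM, V, hV1, hV2, hVeq⟩ := exists_phi_preimage hM hys hY.1 hY.2
      refine ⟨U, ⟨hU1, hU2⟩, V, ⟨hV1, hV2⟩, ?_⟩
      have hLU := hLmem hU1 hU2
      have hLV := hL'mem hV1 hV2
      have htr := pMap_transfer N M x y xs ys zs ts a b n m hxne hyne
        hxsne hysne hU1 hU2 hV1 hV2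
      have hE' := hE U ⟨hU1, hU2⟩ V ⟨hV1, hV2⟩
      have heq : Q₁ (Lmap (x 0) (x N) (xs 0) (xs N) X) (Lmap (y 0) (y M) (ys 0) (ys M) Y)
          - G₁ X Y = a n m * (Q₁ (Lmap (x 0) (x N) (xs 0) (xs N) U)
            (Lmap (y 0) (y M) (ys 0) (ys M) V) - G₁ U V) := by
        rw [← hUeq, ← hVeq, hcomX n hn1 hnN U, hcomY m hm1 hmM V,
          (hQ.2.2.2 n m hn1 hnN hm1 hmM _ hLU _ hLV).1,
          (hG.2.2.2 n m hn1 hnN hm1 hmM U ⟨hU1, hU2⟩ V ⟨hV1, hV2⟩).1, hE', htr]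
        ring
      have h2 : |a n m| * |Q₁ (Lmap (x 0) (x N) (xs 0) (xs N) U)
          (Lmap (y 0) (y M) (ys 0) (ys M) V) - G₁ U V| ≤ α * |Q₁ (Lmap (x 0) (x N) (xs 0) (xs N) U)
          (Lmap (y 0) (y M) (ys 0) (ys M) V) - G₁ U V| :=
        mul_le_mul_of_nonneg_right (haα n m hn1 hnN hm1 hmM) (abs_nonneg _)
      rw [heq, abs_mul]
      linarith
    intro X hX Y hY
    have h := hF0 X hX Y hY
    rw [zero_div] at h
    have h0 := abs_nonneg (Q₁ (Lmap (x 0) (x N) (xs 0) (xs N) X)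
      (Lmap (y 0) (y M) (ys 0) (ys M) Y) - G₁ X Y)
    have := abs_eq_zero.mp (le_antisymm h h0)
    linarith
  -- final assembly
  intro X hX Y hY
  have hXY := Set.mem_prod.1 (hsub (Set.mk_mem_prod hX hY))
  have hXx : X ∈ Icc (x 0) (x N) := hXY.1
  have hYy : Y ∈ Icc (y 0) (y M) := hXY.2
  have h1 := hB X hXx Y hYy
  have h2 := hD1 X hXx Y hYy
  have h3 : |Q₁ X Y - G₁ X Y| ≤ Mb * sK := by
    rw [← hFG X hX Y hY]
    have hLX := hLmem hX.1 hX.2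
    have hLY := hL'mem hY.1 hY.2
    refine (hH1 X hXx Y hYy _ hLX _ hLY).trans ?_
    apply mul_le_mul_of_nonneg_left _ hMb
    have hbx := Lmap_abs_sub (u := x 0) (v := x N) hxs0N hX.1 hX.2
    have hby := Lmap_abs_sub (u := y 0) (v := y M) hys0M hY.1 hY.2
    have key : ∀ i ≤ N, ∀ j ≤ M, (|x i - xs i| + |y j - ys j|) ^ δ ≤ sK :=
      fun i hi j hj => le_supKnotDiff hi hj
    have habs0 : |xs 0 - x 0| = |x 0 - xs 0| := abs_sub_comm _ _
    have habsN : |xs N - x N| = |x N - xs N| := abs_sub_comm _ _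
    have habs0' : |ys 0 - y 0| = |y 0 - ys 0| := abs_sub_comm _ _
    have habsM : |ys M - y M| = |y M - ys M| := abs_sub_comm _ _
    rw [habs0, habsN] at hbx
    rw [habs0', habsM] at hby
    rcases max_cases |x 0 - xs 0| |x N - xs N| with ⟨hm1, _⟩ | ⟨hm1, _⟩ <;>
      rcases max_cases |y 0 - ys 0| |y M - ys M| with ⟨hm2, _⟩ | ⟨hm2, _⟩
    · refine (Real.rpow_le_rpow (by positivity) (by rw [hm1] at hbx; rw [hm2] at hby; linarith)
        hδ.1.le).trans (key 0 (Nat.zero_le N) 0 (Nat.zero_le M))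
    · refine (Real.rpow_le_rpow (by positivity) (by rw [hm1] at hbx; rw [hm2] at hby; linarith)
        hδ.1.le).trans (key 0 (Nat.zero_le N) M le_rfl)
    · refine (Real.rpow_le_rpow (by positivity) (by rw [hm1] at hbx; rw [hm2] at hby; linarith)
        hδ.1.le).trans (key N le_rfl 0 (Nat.zero_le M))
    · refine (Real.rpow_le_rpow (by positivity) (by rw [hm1] at hbx; rw [hm2] at hby; linarith)
        hδ.1.le).trans (key N le_rfl M le_rfl)
  have htri : |F₁ X Y - G₁ X Y| ≤ |F₁ X Y - P₁ X Y| + |P₁ X Y - Q₁ X Y| + |Q₁ X Y - G₁ X Y| := by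
    have u1 := abs_sub_le (F₁ X Y) (P₁ X Y) (G₁ X Y)
    have u2 := abs_sub_le (P₁ X Y) (Q₁ X Y) (G₁ X Y)
    linarith
  have hden : (0:ℝ) < (1-α)*(1-γ) := mul_pos (by linarith) (by linarith)
  have h1a : (0:ℝ) < 1 - α := by linarith
  have h1c : (0:ℝ) < 1 - γ := by linarith
  have e1 : (β * (((1+γ)*st + 0*st)/(1-γ)) + ((1+α)*0 + β*st))/(1-α)
      = (2*β*st)/((1-α)*(1-γ)) := by
    field_simp
    ring
  have e2 : ((1+α)*sz + β*0)/(1-α) = ((1+α)*sz)/(1-α) := by rw [mul_zero, add_zero]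
  have k1 : (2*β*st)/((1-α)*(1-γ)) ≤ 8 * β / ((1 - α) * (1 - γ)) * st := by
    rw [div_mul_eq_mul_div]
    exact (div_le_div_iff_of_pos_right hden).mpr (by nlinarith)
  have k2 : ((1+α)*sz)/(1-α) ≤ 4 * (1 + α) / (1 - α) * sz := by
    rw [div_mul_eq_mul_div]
    exact (div_le_div_iff_of_pos_right h1a).mpr (by nlinarith)
  have k3 : Mb*sK ≤ (2 * β * γ / ((1 - α) * (1 - γ)) + (1 + α) / (1 - α)) * Mb * sK := by
    have hh1 : (1:ℝ) ≤ (1+α)/(1-α) := (one_le_div h1a).mpr (by linarith)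
    have hh2 : 0 ≤ 2*β*γ/((1-α)*(1-γ)) := div_nonneg (by nlinarith) hden.le
    have hh3 : 0 ≤ (2*β*γ/((1-α)*(1-γ)) + (1+α)/(1-α) - 1) * (Mb*sK) :=
      mul_nonneg (by linarith) (mul_nonneg hMb hsK0)
    nlinarith [hh3]
  rw [e1] at h1
  rw [e2] at h2
  linarith

end
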